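/- Let s'' and s̃ be reals with 0 ≤ s'' and s̃ > 2·s'', and let d̃ : Σ^* → [0,∞) be a martingale. Suppose X ∈ Σ^∞ satisfies limsup_{n→∞} d̃(X↾n) / 2^{(1−s'')·n} = ∞. Then there exist infinitely many n ∈ ℕ such that d̃(X↾2^n) > 2^{(1−s̃)·2^{n−1}}·d̃(X↾2^{n−1}). -/

import Mathlib

open Filter MeasureTheory

/-- The first `n` bits of an infinite binary sequence, as a finite string. -/
def pre (X : ℕ → Bool) (n : ℕ) : List Bool := List.ofFn (fun i : Fin n => X i)

/-- If a martingale `d̃` satisfies `limsup d̃(X↾n)/2^{(1-s'')n} = ∞` with `s̃ > 2 s'' ≥ 0`, then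
for infinitely many `n`, `d̃(X↾2^n) > 2^{(1-s̃)2^{n-1}} d̃(X↾2^{n-1})`. -/
theorem martingale_doubling_growth
    (s'' st : ℝ) (h0 : 0 ≤ s'') (hst : 2 * s'' < st)
    (d : List Bool → ℝ) (hnonneg : ∀ w, 0 ≤ d w)
    (hmart : ∀ w, d (w ++ [false]) + d (w ++ [true]) = 2 * d w)
    (X : ℕ → Bool)
    (hX : ∀ C : ℝ, ∃ᶠ n in atTop, C < d (pre X n) / 2 ^ ((1 - s'') * (n : ℝ))) :
    ∃ᶠ n : ℕ in atTop,
      2 ^ ((1 - st) * (2 : ℝ) ^ (n - 1)) * d (pre X (2 ^ (n - 1))) < d (pre X (2 ^ n)) := by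
  by_contra hcon
  rw [Filter.not_frequently] at hcon
  rw [Filter.eventually_atTop] at hcon
  obtain ⟨N, hN⟩ := hcon
  simp only [not_lt] at hN
  -- one-step martingale bound
  have hstep : ∀ k, d (pre X (k+1)) ≤ 2 * d (pre X k) := by
    intro k
    have hp : pre X (k+1) = pre X k ++ [X k] := by
      show List.ofFn (fun i : Fin (k+1) => X i) = _
      rw [List.ofFn_succ']
      simp [pre, List.concat_eq_append]
    have hm := hmart (pre X k)
    have h0' := hnonneg (pre X k ++ [false])
    have h1' := hnonneg (pre X k ++ [true])
    rw [hp]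
    cases hXk : X k <;> linarith
  -- iterated martingale bound
  have hA : ∀ m k, d (pre X (m+k)) ≤ 2^k * d (pre X m) := by
    intro m k
    induction k with
    | zero => simp
    | succ k ih =>
      have h2 : (0:ℝ) ≤ 2^k := by positivity
      calc d (pre X (m+(k+1))) = d (pre X ((m+k)+1)) := by ring_nf
        _ ≤ 2 * d (pre X (m+k)) := hstep (m+k)
        _ ≤ 2 * (2^k * d (pre X m)) := by nlinarith [hnonneg (pre X (m+k))]
        _ = 2^(k+1) * d (pre X m) := by ring
  -- one-step dyadic bound from the negated conclusion
  have hstep2 : ∀ j, N ≤ j →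
      d (pre X (2^(j+1))) ≤ (2:ℝ) ^ ((1-st) * (2:ℝ)^j) * d (pre X (2^j)) := by
    intro j hj
    have := hN (j+1) (le_trans hj (Nat.le_succ j))
    simpa using this
  -- iterated dyadic bound
  have hB : ∀ k, d (pre X (2^(N+k))) ≤
      (2:ℝ) ^ ((1-st) * ((2:ℝ)^(N+k) - (2:ℝ)^N)) * d (pre X (2^N)) := by
    intro k
    induction k with
    | zero => simp
    | succ k ih =>
      have h1 := hstep2 (N+k) (Nat.le_add_right N k)
      have hpos : (0:ℝ) < (2:ℝ) ^ ((1-st) * (2:ℝ)^(N+k)) := Real.rpow_pos_of_pos two_pos _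
      calc d (pre X (2^(N+(k+1)))) = d (pre X (2^((N+k)+1))) := by ring_nf
        _ ≤ (2:ℝ) ^ ((1-st) * (2:ℝ)^(N+k)) * d (pre X (2^(N+k))) := h1
        _ ≤ (2:ℝ) ^ ((1-st) * (2:ℝ)^(N+k)) *
            ((2:ℝ) ^ ((1-st) * ((2:ℝ)^(N+k) - (2:ℝ)^N)) * d (pre X (2^N))) := by
          exact mul_le_mul_of_nonneg_left ih (le_of_lt hpos)
        _ = (2:ℝ) ^ ((1-st) * ((2:ℝ)^(N+(k+1)) - (2:ℝ)^N)) * d (pre X (2^N)) := by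
          rw [← mul_assoc, ← Real.rpow_add two_pos]
          congr 2
          have : (2:ℝ)^(N+(k+1)) = 2 * (2:ℝ)^(N+k) := by ring
          rw [this]; ring
  set C : ℝ := (2:ℝ) ^ (-(1-st) * (2:ℝ)^N) * d (pre X (2^N)) with hCdef
  have hCnn : 0 ≤ C := mul_nonneg (le_of_lt (Real.rpow_pos_of_pos two_pos _)) (hnonneg _)
  have hB' : ∀ j, N ≤ j → d (pre X (2^j)) ≤ C * (2:ℝ) ^ ((1-st) * (2:ℝ)^j) := by
    intro j hj
    obtain ⟨k, rfl⟩ := Nat.exists_eq_add_of_le hj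
    calc d (pre X (2^(N+k))) ≤
        (2:ℝ) ^ ((1-st) * ((2:ℝ)^(N+k) - (2:ℝ)^N)) * d (pre X (2^N)) := hB k
      _ = C * (2:ℝ) ^ ((1-st) * (2:ℝ)^(N+k)) := by
        rw [hCdef]
        rw [show (1-st) * ((2:ℝ)^(N+k) - (2:ℝ)^N) =
          -(1-st) * (2:ℝ)^N + (1-st) * (2:ℝ)^(N+k) by ring]
        rw [Real.rpow_add two_pos]
        ring
  set C' : ℝ := C * (2:ℝ) ^ ((2*s'' - st) * (2:ℝ)^N) with hC'def
  -- get a large witness from hX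
  obtain ⟨m, hm, hXm⟩ := ((hX C').and_eventually
    (Filter.eventually_ge_atTop (max 2 (2^N + 1)))).exists
  obtain ⟨hm2, hmN⟩ := max_le_iff.mp hXm
  set n : ℕ := Nat.clog 2 m with hndef
  have hn1 : m ≤ 2^n := Nat.le_pow_clog (by norm_num) m
  have hn2 : N + 1 ≤ n := (Nat.lt_clog_iff_pow_lt (by norm_num)).mpr (by omega)
  set j : ℕ := n - 1 with hjdef
  have hjn : n = j + 1 := by omega
  have hjN : N ≤ j := by omega
  have hjm : 2^j ≤ m := by
    have : 2^j < m := (Nat.lt_clog_iff_pow_lt (by norm_num)).mp (by omega)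
    omega
  have hm2j : m ≤ 2 * 2^j := by
    calc m ≤ 2^n := hn1
      _ = 2 * 2^j := by rw [hjn]; ring
  -- turn hX inequality into a product bound
  have hppos : (0:ℝ) < (2:ℝ) ^ ((1 - s'') * (m:ℝ)) := Real.rpow_pos_of_pos two_pos _
  rw [lt_div_iff₀ hppos] at hm
  -- bound d (pre X m) from the dyadic bound
  have hAm : d (pre X m) ≤ 2^(m - 2^j) * d (pre X (2^j)) := by
    have := hA (2^j) (m - 2^j)
    rwa [Nat.add_sub_cancel' hjm] at this
  have hBj := hB' j hjN
  have hnp : (0:ℝ) ≤ (2:ℝ)^(m - 2^j) := by positivity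
  have key : C' * (2:ℝ) ^ ((1 - s'') * (m:ℝ)) <
      (2:ℝ)^(m - 2^j) * (C * (2:ℝ) ^ ((1-st) * (2:ℝ)^j)) := by
    calc C' * (2:ℝ) ^ ((1 - s'') * (m:ℝ)) < d (pre X m) := hm
      _ ≤ 2^(m - 2^j) * d (pre X (2^j)) := hAm
      _ ≤ 2^(m - 2^j) * (C * (2:ℝ) ^ ((1-st) * (2:ℝ)^j)) :=
          mul_le_mul_of_nonneg_left hBj hnp
  -- rewrite the nat power as an rpow and combine exponents
  have hcast : ((2:ℝ):ℝ)^(m - 2^j) = (2:ℝ) ^ (((m:ℝ) - (2:ℝ)^j)) := by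
    rw [← Real.rpow_natCast (2:ℝ) (m - 2^j), Nat.cast_sub hjm]
    norm_num
  have key2 : C' * (2:ℝ) ^ ((1 - s'') * (m:ℝ)) <
      C * (2:ℝ) ^ (s'' * (m:ℝ) - st * (2:ℝ)^j) * (2:ℝ) ^ ((1 - s'') * (m:ℝ)) := by
    calc C' * (2:ℝ) ^ ((1 - s'') * (m:ℝ)) <
        (2:ℝ)^(m - 2^j) * (C * (2:ℝ) ^ ((1-st) * (2:ℝ)^j)) := key
      _ = C * ((2:ℝ) ^ (((m:ℝ) - (2:ℝ)^j)) * (2:ℝ) ^ ((1-st) * (2:ℝ)^j)) := by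
          rw [hcast]; ring
      _ = C * (2:ℝ) ^ ((s'' * (m:ℝ) - st * (2:ℝ)^j) + (1 - s'') * (m:ℝ)) := by
          rw [← Real.rpow_add two_pos]; congr 2; ring
      _ = C * (2:ℝ) ^ (s'' * (m:ℝ) - st * (2:ℝ)^j) * (2:ℝ) ^ ((1 - s'') * (m:ℝ)) := by
          rw [Real.rpow_add two_pos]; ring
  have key3 : C' < C * (2:ℝ) ^ (s'' * (m:ℝ) - st * (2:ℝ)^j) :=
    lt_of_mul_lt_mul_right key2 hppos.le
  -- exponent comparison
  have hexp : s'' * (m:ℝ) - st * (2:ℝ)^j ≤ (2*s'' - st) * (2:ℝ)^N := by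
    have hmr : (m:ℝ) ≤ 2 * (2:ℝ)^j := by
      calc (m:ℝ) ≤ ((2 * 2^j : ℕ):ℝ) := by exact_mod_cast hm2j
        _ = 2 * (2:ℝ)^j := by push_cast; ring
    have h2Nj : (2:ℝ)^N ≤ (2:ℝ)^j := by
      apply pow_le_pow_right₀ one_le_two hjN
    nlinarith [pow_pos (two_pos (α := ℝ)) j, pow_pos (two_pos (α := ℝ)) N]
  have hfin : C * (2:ℝ) ^ (s'' * (m:ℝ) - st * (2:ℝ)^j) ≤ C' := by
    rw [hC'def]
    apply mul_le_mul_of_nonneg_left _ hCnn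
    exact Real.rpow_le_rpow_of_exponent_le one_le_two hexp
  exact lt_irrefl C' (lt_of_lt_of_le key3 hfin)
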